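/- arXiv:1805.01953 — 2 statements merged into one kernel-verified Lean document; each statement's English description precedes it below -/
import Mathlib

section
/- Let G be a minimally bad graph and O = [v_1,…,v_n] a bad connected order of G. If x ∈ V(G) with x ≠ v_n and the restriction O∖x of O to V(G)∖{x} is a connected order of G∖x, then there exists a vertex y ≠ x of G such that π_{G∖x, O∖x}(y) ≠ π_{G,O}(y). -/
open Classical in
noncomputable def greedyStep {V : Type*} (G : SimpleGraph V) (f : V → ℕ) (v : V) : V → ℕ :=
  fun u => if u = v then sInf {c : ℕ | 1 ≤ c ∧ ∀ w, G.Adj v w → f w ≠ c} else f u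

noncomputable def greedyFrom {V : Type*} (G : SimpleGraph V) (f : V → ℕ) (l : List V) : V → ℕ :=
  l.foldl (greedyStep G) f

noncomputable def greedy {V : Type*} (G : SimpleGraph V) (l : List V) : V → ℕ :=
  greedyFrom G (fun _ => 0) l

open Classical in
noncomputable def greedyStart2 {V : Type*} (G : SimpleGraph V) : List V → V → ℕ
  | [] => fun _ => 0
  | v :: rest => greedyFrom G (fun u => if u = v then 2 else 0) rest

noncomputable def chi {V : Type*} [Fintype V] (G : SimpleGraph V) : ℕ :=
  sInf {n : ℕ | G.Colorable n}

open Classical in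
noncomputable def idx {V : Type*} (l : List V) (v : V) : ℕ := l.idxOf v

noncomputable def maxIdx {V : Type*} (l : List V) (A : Set V) : ℕ := sSup (idx l '' A)
noncomputable def minIdx {V : Type*} (l : List V) (A : Set V) : ℕ := sInf (idx l '' A)

def IsConnOrder {V : Type*} (G : SimpleGraph V) (l : List V) : Prop :=
  l.Nodup ∧ (∀ v : V, v ∈ l) ∧
    ∀ i : Fin l.length, 0 < i.1 → ∃ j : Fin l.length, j.1 < i.1 ∧ G.Adj (l.get j) (l.get i)

def GoodOrder {V : Type*} [Fintype V] (G : SimpleGraph V) (l : List V) : Prop :=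
  ∀ v : V, greedy G l v ≤ chi G

def Good {V : Type*} [Fintype V] (G : SimpleGraph V) : Prop :=
  ∀ s : Finset V, (G.induce (↑s : Set V)).Connected →
    ∀ l : List ↥(↑s : Set V), IsConnOrder (G.induce (↑s : Set V)) l →
      GoodOrder (G.induce (↑s : Set V)) l

def BadOrder {V : Type*} [Fintype V] (G : SimpleGraph V) (l : List V) : Prop :=
  IsConnOrder G l ∧ ¬ GoodOrder G l

def MinimallyBad {V : Type*} [Fintype V] (G : SimpleGraph V) : Prop :=
  ¬ Good G ∧ ∀ s : Finset V, s ≠ Finset.univ →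
    (G.induce (↑s : Set V)).Connected → Good (G.induce (↑s : Set V))

def IsInducedPath {V : Type*} (G : SimpleGraph V) (P : List V) : Prop :=
  P.Nodup ∧ ∀ i j : Fin P.length,
    G.Adj (P.get i) (P.get j) ↔ (i.1 + 1 = j.1 ∨ j.1 + 1 = i.1)

def IsFlatPath {V : Type*} (G : SimpleGraph V) (P : List V) : Prop :=
  IsInducedPath G P ∧
    ∀ i : Fin P.length, 0 < i.1 → i.1 + 1 < P.length → (G.neighborSet (P.get i)).ncard = 2

def WellOrderedPath {V : Type*} (l P : List V) : Prop :=
  P.Pairwise (fun u v => idx l u < idx l v) ∨ P.Pairwise (fun u v => idx l v < idx l u)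

def IsMaxFlatPath {V : Type*} (G : SimpleGraph V) (P : List V) : Prop :=
  IsFlatPath G P ∧ ∀ h : P ≠ [],
    (G.neighborSet (P.head h)).ncard ≠ 2 ∧ (G.neighborSet (P.getLast h)).ncard ≠ 2

def ClawFree {V : Type*} (G : SimpleGraph V) : Prop :=
  ∀ a b c d : V, G.Adj a b → G.Adj a c → G.Adj a d → b ≠ c → b ≠ d → c ≠ d →
    G.Adj b c ∨ G.Adj b d ∨ G.Adj c d

def IsHole {V : Type*} (G : SimpleGraph V) (C : List V) : Prop :=
  4 ≤ C.length ∧ C.Nodup ∧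
    ∀ i j : Fin C.length, G.Adj (C.get i) (C.get j) ↔
      ((i.1 + 1) % C.length = j.1 ∨ (j.1 + 1) % C.length = i.1)

def GemFree {V : Type*} (G : SimpleGraph V) : Prop :=
  ¬ ∃ a b c d e : V, G.Adj a b ∧ G.Adj b c ∧ G.Adj c d ∧
    ¬ G.Adj a c ∧ ¬ G.Adj a d ∧ ¬ G.Adj b d ∧
    G.Adj e a ∧ G.Adj e b ∧ G.Adj e c ∧ G.Adj e d

-- ========== helpers ==========

lemma greedyFrom_cons {V : Type*} (G : SimpleGraph V) (f : V → ℕ) (a : V) (li : List V) :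
    greedyFrom G f (a :: li) = greedyFrom G (greedyStep G f a) li := rfl

lemma greedyFrom_append {V : Type*} (G : SimpleGraph V) (f : V → ℕ) (l1 l2 : List V) :
    greedyFrom G f (l1 ++ l2) = greedyFrom G (greedyFrom G f l1) l2 :=
  List.foldl_append

lemma greedyFrom_of_not_mem {V : Type*} (G : SimpleGraph V) (f : V → ℕ) (li : List V) (v : V)
    (h : v ∉ li) : greedyFrom G f li v = f v := by
  induction li generalizing f with
  | nil => rfl
  | cons a as ih =>
    simp only [List.mem_cons, not_or] at h
    rw [greedyFrom_cons, ih _ h.2]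
    unfold greedyStep
    rw [if_neg h.1]

lemma greedy_transfer {A B : Type*} (G : SimpleGraph A) (H : SimpleGraph B)
    (φ : A → B) (hinj : Function.Injective φ)
    (hadj : ∀ a a', G.Adj a a' ↔ H.Adj (φ a) (φ a'))
    (li : List A) (f : A → ℕ) (g : B → ℕ)
    (hfg : ∀ a, g (φ a) = f a)
    (hout : ∀ b, (∀ a, φ a ≠ b) → g b = 0) :
    (∀ a, greedyFrom H g (li.map φ) (φ a) = greedyFrom G f li a) ∧
    (∀ b, (∀ a, φ a ≠ b) → greedyFrom H g (li.map φ) b = 0) := by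
  induction li generalizing f g with
  | nil => exact ⟨hfg, hout⟩
  | cons v vs ih =>
    have hset : {c : ℕ | 1 ≤ c ∧ ∀ w, H.Adj (φ v) w → g w ≠ c}
        = {c : ℕ | 1 ≤ c ∧ ∀ w, G.Adj v w → f w ≠ c} := by
      ext c
      simp only [Set.mem_setOf_eq]
      constructor
      · rintro ⟨h1, h2⟩
        exact ⟨h1, fun w hw => by rw [← hfg w]; exact h2 _ ((hadj v w).1 hw)⟩
      · rintro ⟨h1, h2⟩
        refine ⟨h1, fun w hw hc => ?_⟩
        by_cases hr : ∃ a, φ a = w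
        · obtain ⟨a, rfl⟩ := hr
          exact h2 a ((hadj v a).2 hw) (by rw [← hfg a, hc])
        · push_neg at hr
          have := hout w hr
          omega
    have hstep : ∀ a, greedyStep H g (φ v) (φ a) = greedyStep G f v a := by
      intro a
      unfold greedyStep
      by_cases h : a = v
      · subst h; rw [if_pos rfl, if_pos rfl, hset]
      · rw [if_neg (fun hh => h (hinj hh)), if_neg h, hfg]
    have hstepout : ∀ b, (∀ a, φ a ≠ b) → greedyStep H g (φ v) b = 0 := by
      intro b hb
      unfold greedyStep
      rw [if_neg (Ne.symm (hb v)), hout b hb]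
    simp only [List.map_cons, greedyFrom_cons]
    exact ih _ _ hstep hstepout

lemma connected_of_connOrder {A : Type*} (G : SimpleGraph A) (li : List A)
    (hcov : ∀ v, v ∈ li) (hne : li ≠ [])
    (h : ∀ i : Fin li.length, 0 < i.1 →
      ∃ j : Fin li.length, j.1 < i.1 ∧ G.Adj (li.get j) (li.get i)) :
    G.Connected := by
  have hlen : 0 < li.length := List.length_pos_iff.2 hne
  have key : ∀ n (hn : n < li.length), G.Reachable (li.get ⟨0, hlen⟩) (li.get ⟨n, hn⟩) := by
    intro n
    induction n using Nat.strong_induction_on with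
    | _ n ih =>
      intro hn
      rcases Nat.eq_zero_or_pos n with h0 | h0
      · subst h0; exact SimpleGraph.Reachable.refl _
      · obtain ⟨j, hj, hadj⟩ := h ⟨n, hn⟩ h0
        exact (ih j.1 hj j.2).trans hadj.reachable
  rw [SimpleGraph.connected_iff]
  refine ⟨?_, ⟨li.get ⟨0, hlen⟩⟩⟩
  intro u v
  obtain ⟨iu, hu⟩ := List.mem_iff_get.mp (hcov u)
  obtain ⟨iv, hv⟩ := List.mem_iff_get.mp (hcov v)
  rw [← hu, ← hv]
  exact (key iu.1 iu.2).symm.trans (key iv.1 iv.2)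

lemma connOrder_lift {A B : Type*} (G : SimpleGraph A) (H : SimpleGraph B)
    (φ : B → A) (hadj : ∀ b b', H.Adj b b' ↔ G.Adj (φ b) (φ b'))
    (li : List A) (li' : List B) (hmap : li'.map φ = li)
    (hnd : li.Nodup) (hcov : ∀ b, b ∈ li')
    (hcond : ∀ i : Fin li.length, 0 < i.1 →
      ∃ j : Fin li.length, j.1 < i.1 ∧ G.Adj (li.get j) (li.get i)) :
    IsConnOrder H li' := by
  subst hmap
  have hlen : li'.length = (li'.map φ).length := by simp
  have hget : ∀ (i : Fin li'.length), (li'.map φ).get ⟨i.1, by omega⟩ = φ (li'.get i) := by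
    intro i
    simp
  have hnd' : li'.Nodup := List.Nodup.of_map φ hnd
  refine ⟨hnd', hcov, ?_⟩
  intro i hi
  obtain ⟨j, hj, hadjj⟩ := hcond ⟨i.1, by omega⟩ hi
  refine ⟨⟨j.1, by omega⟩, hj, ?_⟩
  rw [hadj, ← hget ⟨j.1, by omega⟩, ← hget i]
  exact hadjj

lemma chi_le_of_embedding {A B : Type*} [Fintype A] [Fintype B]
    (G : SimpleGraph A) (H : SimpleGraph B) (e : G ↪g H) : chi G ≤ chi H := by
  have hH : H.Colorable (chi H) :=
    Nat.sInf_mem (⟨Fintype.card B, H.colorable_of_fintype⟩ : {n : ℕ | H.Colorable n}.Nonempty)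
  exact Nat.sInf_le (SimpleGraph.Colorable.of_hom e.toHom hH)

lemma lift_to_subtype {V : Type*} [DecidableEq V] (G : SimpleGraph V) (li : List V)
    (t : Finset V) (ht : ∀ v, v ∈ li ↔ v ∈ t) (hnd : li.Nodup)
    (hcond : ∀ i : Fin li.length, 0 < i.1 →
      ∃ j : Fin li.length, j.1 < i.1 ∧ G.Adj (li.get j) (li.get i)) :
    ∃ lt : List ↥(↑t : Set V), lt.map Subtype.val = li ∧
      IsConnOrder (G.induce (↑t : Set V)) lt := by
  have hmem : ∀ v, v ∈ li → v ∈ (↑t : Set V) := by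
    intro v hv; rw [Finset.mem_coe, ← ht]; exact hv
  set lt := li.pmap (fun v hv => (⟨v, hv⟩ : ↥(↑t : Set V))) hmem with hlt
  have hmap : lt.map Subtype.val = li := by
    simp [hlt, List.map_pmap]
  refine ⟨lt, hmap, ?_⟩
  refine connOrder_lift (G := G) (H := G.induce (↑t : Set V)) Subtype.val (fun b b' => SimpleGraph.comap_adj) li lt hmap hnd ?_ hcond
  rintro ⟨b, hb⟩
  have hbli : b ∈ li := by rw [ht]; exact hb
  rw [hlt, List.mem_pmap]
  exact ⟨b, hbli, rfl⟩

lemma good_bound {W : Type*} [Fintype W] [DecidableEq W] (H : SimpleGraph W) (hg : Good H)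
    (li : List W) (hc : IsConnOrder H li) (hne : li ≠ []) :
    ∀ w, greedy H li w ≤ chi H := by
  intro w
  obtain ⟨hnd, hcov, hcond⟩ := hc
  obtain ⟨lt, hmap, hco⟩ := lift_to_subtype H li Finset.univ
    (fun v => by simp [hcov v]) hnd hcond
  have hltne : lt ≠ [] := by
    intro h; rw [h] at hmap; exact hne hmap.symm
  have hconn : (H.induce (↑(Finset.univ : Finset W) : Set W)).Connected :=
    connected_of_connOrder _ lt hco.2.1 hltne hco.2.2
  have hgo := hg Finset.univ hconn lt hco
  have hwmem : w ∈ (↑(Finset.univ : Finset W) : Set W) := by simp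
  have htrans := greedy_transfer (H.induce (↑(Finset.univ : Finset W) : Set W)) H
    Subtype.val Subtype.val_injective (fun a a' => Iff.symm SimpleGraph.comap_adj)
    lt (fun _ => 0) (fun _ => 0) (fun _ => rfl) (fun _ _ => rfl)
  have h1 : greedy H li w = greedy (H.induce (↑(Finset.univ : Finset W) : Set W)) lt ⟨w, hwmem⟩ := by
    rw [greedy, greedy, ← hmap]
    exact htrans.1 ⟨w, hwmem⟩
  rw [h1]
  calc greedy (H.induce (↑(Finset.univ : Finset W) : Set W)) lt ⟨w, hwmem⟩
      ≤ chi (H.induce (↑(Finset.univ : Finset W) : Set W)) := hgo _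
    _ ≤ chi H := chi_le_of_embedding _ _ (SimpleGraph.Embedding.induce _)

theorem stmt3 {V : Type*} [Fintype V] [DecidableEq V] (G : SimpleGraph V) (l : List V)
    (hmin : MinimallyBad G) (hbad : BadOrder G l)
    (vn : V) (hvn : l.getLast? = some vn)
    (x : V) (hx : x ≠ vn)
    (s : Finset V) (hs : s = Finset.univ.erase x)
    (l' : List ↥(↑s : Set V)) (hl' : l'.map Subtype.val = l.erase x)
    (hconn : IsConnOrder (G.induce (↑s : Set V)) l') :
    ∃ y : ↥(↑s : Set V),
      greedy (G.induce (↑s : Set V)) l' y ≠ greedy G l (y : V) := by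
  obtain ⟨⟨hnd, hcovl, hcond⟩, hng⟩ := hbad
  unfold GoodOrder at hng
  push_neg at hng
  obtain ⟨v, hv⟩ := hng
  have hlne : l ≠ [] := by rintro rfl; simp at hvn
  have hlast : l.getLast hlne = vn := by
    rw [List.getLast?_eq_getLast hlne] at hvn
    exact Option.some_injective _ hvn
  have hlpos : 0 < l.length := List.length_pos_iff.2 hlne
  have hlastg : l[l.length - 1]'(by omega) = vn := by
    rw [← List.getLast_eq_getElem]; exact hlast
  -- v ≠ x via the prefix argument
  have hvx : v ≠ x := by
    rintro rfl
    have hxl : v ∈ l := hcovl v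
    set m := List.idxOf v l with hm
    have hmlt : m < l.length := List.idxOf_lt_length_iff.2 hxl
    have hgx : l[m] = v := List.getElem_idxOf hmlt
    set p := l.take (m + 1) with hp
    have hpl : p.length = m + 1 := by rw [hp, List.length_take]; omega
    have hpg : ∀ (i : ℕ) (hi : i < p.length), p[i] = l[i]'(by omega) := by
      intro i hi
      exact List.getElem_take
    have hxp : v ∈ p := by
      have : p[m]'(by omega) = v := by rw [hpg m (by omega)]; exact hgx
      rw [← this]; exact List.getElem_mem _
    have hpnd : p.Nodup := hnd.sublist (List.take_sublist _ _)
    have hxdrop : v ∉ l.drop (m + 1) := by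
      have hnd2 : (l.take (m+1) ++ l.drop (m+1)).Nodup := by
        rw [List.take_append_drop]; exact hnd
      exact fun h => (List.nodup_append.mp hnd2).2.2 v hxp v h rfl
    have hgl : greedy G l v = greedy G p v := by
      conv_lhs => rw [greedy, ← List.take_append_drop (m + 1) l, greedyFrom_append]
      rw [greedyFrom_of_not_mem _ _ _ _ hxdrop]
      rfl
    have hcondp : ∀ i : Fin p.length, 0 < i.1 →
        ∃ j : Fin p.length, j.1 < i.1 ∧ G.Adj (p.get j) (p.get i) := by
      intro i hi
      have hi1 : i.1 < p.length := i.2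
      have hi2 : i.1 < l.length := by omega
      obtain ⟨j, hj, hadj⟩ := hcond ⟨i.1, hi2⟩ hi
      have hj' : (j : ℕ) < i.1 := hj
      have hj2 : j.1 < p.length := by omega
      refine ⟨⟨j.1, hj2⟩, hj', ?_⟩
      have e1 : p.get ⟨j.1, hj2⟩ = l.get ⟨j.1, by omega⟩ := by
        simp only [List.get_eq_getElem]; exact hpg j.1 hj2
      have e2 : p.get ⟨i.1, hi1⟩ = l.get ⟨i.1, hi2⟩ := by
        simp only [List.get_eq_getElem]; exact hpg i.1 hi1
      rw [e1, e2]
      exact hadj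
    set t := p.toFinset with htdef
    have ht : ∀ w, w ∈ p ↔ w ∈ t := by intro w; rw [htdef, List.mem_toFinset]
    have hvn_notp : vn ∉ p := by
      intro hmem
      obtain ⟨i, hi, hgeti⟩ := List.mem_iff_getElem.mp hmem
      have hi2 : i < l.length := by omega
      have hli : l[i] = vn := by rw [← hpg i hi]; exact hgeti
      have hieq : i = l.length - 1 := by
        have := hli.trans hlastg.symm
        exact (List.Nodup.getElem_inj_iff hnd).mp this
      have hmeq : m = l.length - 1 := by omega
      apply hx
      rw [← hgx, ← hlastg]
      congr 1
    have htne : t ≠ Finset.univ := by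
      intro h
      exact hvn_notp ((ht vn).mpr (h ▸ Finset.mem_univ vn))
    obtain ⟨lt, hmapt, hconnt⟩ := lift_to_subtype G p t ht hpnd hcondp
    have hltne : lt ≠ [] := by
      intro h
      rw [h] at hmapt
      rw [← hmapt] at hxp
      simp at hxp
    have hcg : (G.induce (↑t : Set V)).Connected :=
      connected_of_connOrder _ lt hconnt.2.1 hltne hconnt.2.2
    have hgood := hmin.2 t htne hcg
    have hbound := good_bound _ hgood lt hconnt hltne
    have hxt : v ∈ (↑t : Set V) := by rw [Finset.mem_coe, ← ht]; exact hxp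
    have htrans := greedy_transfer (G.induce (↑t : Set V)) G Subtype.val
      Subtype.val_injective (fun a a' => SimpleGraph.comap_adj)
      lt (fun _ => 0) (fun _ => 0) (fun _ => rfl) (fun _ _ => rfl)
    have hgp : greedy G p v = greedy (G.induce (↑t : Set V)) lt ⟨v, hxt⟩ := by
      rw [greedy, greedy, ← hmapt]
      exact htrans.1 ⟨v, hxt⟩
    have hchit : chi (G.induce (↑t : Set V)) ≤ chi G :=
      chi_le_of_embedding _ _ (SimpleGraph.Embedding.induce _)
    have := hbound ⟨v, hxt⟩
    rw [hgl, hgp] at hv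
    omega
  -- now use the minor G \ x
  have hvs : v ∈ (↑s : Set V) := by
    rw [hs]
    simp [hvx]
  refine ⟨⟨v, hvs⟩, ?_⟩
  have hxs : x ∉ s := by rw [hs]; simp
  have hsne : s ≠ Finset.univ := by
    intro h
    exact hxs (h ▸ Finset.mem_univ x)
  have hvns : vn ∈ (↑s : Set V) := by
    rw [hs]
    simp only [Finset.mem_coe, Finset.mem_erase, Finset.mem_univ, and_true]
    exact fun h => hx h.symm
  have hl'ne : l' ≠ [] := by
    intro h
    have := hconn.2.1 ⟨vn, hvns⟩
    rw [h] at this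
    simp at this
  have hcg : (G.induce (↑s : Set V)).Connected :=
    connected_of_connOrder _ l' hconn.2.1 hl'ne hconn.2.2
  have hgood := hmin.2 s hsne hcg
  have hbound := good_bound _ hgood l' hconn hl'ne ⟨v, hvs⟩
  have hchis : chi (G.induce (↑s : Set V)) ≤ chi G :=
    chi_le_of_embedding _ _ (SimpleGraph.Embedding.induce _)
  intro heq
  rw [heq] at hbound
  simp only at hbound
  omega
end

section
/- Let G be a minimally bad graph and O = [v_1,…,v_n] a bad connected order of G. Then for every vertex v ∈ V(G), the induced subgraphs G_{≤v}, G_{≥v}, G_{<v} and G_{>v} are connected (the empty graph being considered connected). In particular, G is connected. -/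
section Lemmas

variable {V : Type*} {W : Type*}

lemma idx_lt_length {l : List V} {v : V} (h : v ∈ l) : idx l v < l.length := by
  classical
  unfold idx; exact List.idxOf_lt_length_iff.2 h

lemma get_idx {l : List V} {v : V} (h : idx l v < l.length) :
    l.get ⟨idx l v, h⟩ = v := by
  classical
  unfold idx at *; exact List.idxOf_get h

lemma idx_get {l : List V} (hn : l.Nodup) (i : Fin l.length) :
    idx l (l.get i) = i.1 := by
  classical
  unfold idx; exact List.get_idxOf hn i

lemma idx_inj {l : List V} {u v : V} (hu : u ∈ l) (hv : v ∈ l)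
    (h : idx l u = idx l v) : u = v := by
  have h1 := get_idx (idx_lt_length hu)
  have h2 := get_idx (idx_lt_length hv)
  rw [← h1, ← h2]
  congr 1
  exact Fin.ext h

/-- In a connected order, every vertex with positive index has an earlier neighbour. -/
lemma earlier_neighbor {G : SimpleGraph V} {l : List V} (hl : IsConnOrder G l)
    {u : V} (hpos : 0 < idx l u) :
    ∃ w, G.Adj u w ∧ idx l w < idx l u := by
  have hu : u ∈ l := hl.2.1 u
  have hlen := idx_lt_length hu
  obtain ⟨j, hj, hadj⟩ := hl.2.2 ⟨idx l u, hlen⟩ hpos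
  refine ⟨l.get j, ?_, ?_⟩
  · have := get_idx hlen
    rw [this] at hadj
    exact hadj.symm
  · rw [idx_get hl.1 j]; exact hj

/-- Connectivity of the subgraph induced on a downward-closed-for-earlier-neighbours set. -/
lemma conn_of_closed {G : SimpleGraph V} {l : List V} (hl : IsConnOrder G l)
    {S : Set V} (hne : S.Nonempty)
    (closure : ∀ u ∈ S, ∀ w, G.Adj u w → idx l w < idx l u → w ∈ S) :
    (G.induce S).Connected := by
  have hmem : (idx l '' S).Nonempty := hne.image _
  obtain ⟨u₀, h₀, hm⟩ := Nat.sInf_mem hmem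
  have reach : ∀ n (u : V) (hu : u ∈ S), idx l u = n →
      (G.induce S).Reachable ⟨u₀, h₀⟩ ⟨u, hu⟩ := by
    intro n
    induction n using Nat.strong_induction_on with
    | _ n ih =>
      intro u hu hn
      rcases eq_or_lt_of_le (hm ▸ Nat.sInf_le ⟨u, hu, rfl⟩ : idx l u₀ ≤ idx l u) with heq | hlt
      · have : u₀ = u := idx_inj (hl.2.1 _) (hl.2.1 _) heq
        exact this ▸ SimpleGraph.Reachable.refl _
      · have hpos : 0 < idx l u := lt_of_le_of_lt (Nat.zero_le _) hlt
        obtain ⟨w, hadj, hwlt⟩ := earlier_neighbor hl hpos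
        have hwS : w ∈ S := closure u hu w hadj hwlt
        have hr := ih (idx l w) (hn ▸ hwlt) w hwS rfl
        have hstep : (G.induce S).Adj ⟨w, hwS⟩ ⟨u, hu⟩ := hadj.symm
        exact hr.trans hstep.reachable
  rw [SimpleGraph.connected_iff]
  refine ⟨fun a b => ?_, ⟨⟨u₀, h₀⟩⟩⟩
  exact (reach _ a.1 a.2 rfl).symm.trans (reach _ b.1 b.2 rfl)

end Lemmas

section ResList

variable {V : Type*}

open Classical in
noncomputable def resList (S : Set V) (l : List V) : List ↥S :=
  l.filterMap (fun u => if h : u ∈ S then some ⟨u, h⟩ else none)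

open Classical in
lemma resList_cons (S : Set V) (v : V) (r : List V) :
    resList S (v :: r) = if h : v ∈ S then ⟨v, h⟩ :: resList S r else resList S r := by
  unfold resList
  rw [List.filterMap_cons]
  split_ifs with h
  · simp [h]
  · simp [h]

lemma mem_resList {S : Set V} {l : List V} {x : ↥S} : x ∈ resList S l ↔ x.1 ∈ l := by
  classical
  unfold resList
  rw [List.mem_filterMap]
  constructor
  · rintro ⟨a, ha, hfa⟩
    by_cases h : a ∈ S
    · rw [dif_pos h] at hfa
      obtain rfl : (⟨a, h⟩ : ↥S) = x := by simpa using hfa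
      exact ha
    · rw [dif_neg h] at hfa
      simp at hfa
  · intro hx
    refine ⟨x.1, hx, ?_⟩
    rw [dif_pos x.2]

lemma nodup_resList {S : Set V} {l : List V} (h : l.Nodup) : (resList S l).Nodup := by
  classical
  refine List.Nodup.filterMap ?_ h
  intro a a' b hb hb'
  split_ifs at hb hb' with h1 h2 <;> simp_all
  exact congrArg Subtype.val (hb.trans hb'.symm)

lemma pairwise_resList {S : Set V} {l : List V} (hn : l.Nodup) :
    (resList S l).Pairwise (fun x y : ↥S => idx l x.1 < idx l y.1) := by
  classical
  have hp : l.Pairwise (fun a b => idx l a < idx l b) := by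
    rw [List.pairwise_iff_get]
    intro i j hij
    rw [idx_get hn i, idx_get hn j]
    exact hij
  unfold resList
  refine List.Pairwise.filterMap _ ?_ hp
  intro a a' hR b hb b' hb'
  split_ifs at hb hb' with h1 h2 <;> simp_all
  rw [← hb, ← hb']
  exact hR

end ResList

section Restrict

variable {V : Type*} {G : SimpleGraph V} {S : Set V} {l : List V}

lemma resList_get_lt (hn : l.Nodup) {i j : Fin (resList S l).length} (h : i < j) :
    idx l ((resList S l).get i).1 < idx l ((resList S l).get j).1 :=
  List.pairwise_iff_get.1 (pairwise_resList hn) i j h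

lemma resList_lt_get (hn : l.Nodup) {i j : Fin (resList S l).length}
    (h : idx l ((resList S l).get i).1 < idx l ((resList S l).get j).1) : i < j := by
  rcases lt_trichotomy i j with h1 | h1 | h1
  · exact h1
  · subst h1; exact absurd h (lt_irrefl _)
  · exact absurd (resList_get_lt hn h1) (by omega)

lemma isConnOrder_res (hl : IsConnOrder G l)
    (closure : ∀ u ∈ S, ∀ w, G.Adj u w → idx l w < idx l u → w ∈ S) :
    IsConnOrder (G.induce S) (resList S l) := by
  refine ⟨nodup_resList hl.1, fun x => mem_resList.2 (hl.2.1 x.1), ?_⟩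
  intro i hi
  have hn := hl.1
  have hlen0 : 0 < (resList S l).length := lt_of_le_of_lt (Nat.zero_le _) i.2
  have h0i : (⟨0, hlen0⟩ : Fin (resList S l).length) < i := by rw [Fin.lt_def]; exact hi
  have hxpos : 0 < idx l ((resList S l).get i).1 :=
    lt_of_le_of_lt (Nat.zero_le _) (resList_get_lt hn h0i)
  obtain ⟨w, hadj, hwlt⟩ := earlier_neighbor hl hxpos
  have hwS : w ∈ S := closure _ ((resList S l).get i).2 w hadj hwlt
  have hyl : (⟨w, hwS⟩ : ↥S) ∈ resList S l := mem_resList.2 (hl.2.1 w)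
  have hk : idx (resList S l) ⟨w, hwS⟩ < (resList S l).length := idx_lt_length hyl
  have hgety : (resList S l).get ⟨_, hk⟩ = ⟨w, hwS⟩ := get_idx hk
  have hji : (⟨idx (resList S l) ⟨w, hwS⟩, hk⟩ : Fin (resList S l).length) < i := by
    apply resList_lt_get hn
    rw [hgety]
    exact hwlt
  rw [Fin.lt_def] at hji
  refine ⟨⟨idx (resList S l) ⟨w, hwS⟩, hk⟩, hji, ?_⟩
  rw [hgety]
  exact hadj.symm

lemma greedyFrom_agree (hn : l.Nodup) (hall : ∀ v : V, v ∈ l)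
    (closure : ∀ u ∈ S, ∀ w, G.Adj u w → idx l w < idx l u → w ∈ S) :
    ∀ (rest p : List V), l = p ++ rest →
    ∀ (f : V → ℕ) (f' : ↥S → ℕ),
    (∀ x : ↥S, x.1 ∈ p → f' x = f x.1) →
    (∀ u, u ∉ p → f u = 0) →
    (∀ x : ↥S, x.1 ∉ p → f' x = 0) →
    ∀ x : ↥S, greedyFrom (G.induce S) f' (resList S rest) x = greedyFrom G f rest x.1 := by
  intro rest
  induction rest with
  | nil =>
    intro p hp f f' hI1 _ _ x
    show f' x = f x.1
    exact hI1 x (by rw [hp, List.append_nil] at hall; exact hall x.1)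
  | cons v rest' ih =>
    intro p hp f f' hI1 hI2 hI3 x
    have hvp : v ∉ p := by
      have hd := hn
      rw [hp, List.nodup_append] at hd
      exact fun hv => hd.2.2 v hv v (by simp) rfl
    have hidxv : idx l v = p.length := by
      classical
      unfold idx
      rw [hp, List.idxOf_append_of_notMem hvp, List.idxOf_cons_self]
      rfl
    have hidxp : ∀ w ∈ p, idx l w < idx l v := by
      classical
      intro w hw
      rw [hidxv]
      unfold idx
      rw [hp, List.idxOf_append_of_mem hw]
      exact List.idxOf_lt_length_iff.2 hw
    have hp' : l = (p ++ [v]) ++ rest' := by rw [hp]; simp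
    have hI2' : ∀ u, u ∉ p ++ [v] → greedyStep G f v u = f u ∧ f u = 0 := by
      intro u hu
      simp only [List.mem_append, List.mem_singleton, not_or] at hu
      constructor
      · unfold greedyStep; rw [if_neg hu.2]
      · exact hI2 u hu.1
    by_cases hvS : v ∈ S
    · rw [resList_cons, dif_pos hvS]
      show greedyFrom (G.induce S) (greedyStep (G.induce S) f' ⟨v, hvS⟩) (resList S rest') x
          = greedyFrom G (greedyStep G f v) rest' x.1
      have hsets : {c : ℕ | 1 ≤ c ∧ ∀ w : ↥S, (G.induce S).Adj ⟨v, hvS⟩ w → f' w ≠ c}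
          = {c : ℕ | 1 ≤ c ∧ ∀ w, G.Adj v w → f w ≠ c} := by
        ext c
        simp only [Set.mem_setOf_eq]
        constructor
        · rintro ⟨h1, h2⟩
          refine ⟨h1, fun w hw => ?_⟩
          by_cases hwp : w ∈ p
          · have hwS : w ∈ S := closure v hvS w hw (hidxp w hwp)
            have := h2 ⟨w, hwS⟩ hw
            rw [hI1 ⟨w, hwS⟩ hwp] at this
            exact this
          · rw [hI2 w hwp]; omega
        · rintro ⟨h1, h2⟩
          refine ⟨h1, fun w hw => ?_⟩
          by_cases hwp : w.1 ∈ p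
          · rw [hI1 w hwp]; exact h2 w.1 hw
          · rw [hI3 w hwp]; omega
      apply ih (p ++ [v]) hp'
      · -- I1
        intro z hz
        rcases List.mem_append.1 hz with hzp | hzv
        · have hzv : z.1 ≠ v := fun h => hvp (h ▸ hzp)
          show greedyStep (G.induce S) f' ⟨v, hvS⟩ z = greedyStep G f v z.1
          unfold greedyStep
          rw [if_neg (fun h => hzv (congrArg Subtype.val h)), if_neg hzv]
          exact hI1 z hzp
        · have hzv : z.1 = v := by simpa using hzv
          have hz' : z = ⟨v, hvS⟩ := Subtype.ext hzv
          subst hz'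
          show greedyStep (G.induce S) f' ⟨v, hvS⟩ ⟨v, hvS⟩ = greedyStep G f v v
          unfold greedyStep
          rw [if_pos rfl, if_pos rfl, hsets]
      · -- I2
        intro u hu
        rw [(hI2' u hu).1]; exact (hI2' u hu).2
      · -- I3
        intro z hz
        have hzp : z.1 ∉ p := fun h => hz (List.mem_append.2 (Or.inl h))
        have hzv : z.1 ≠ v := fun h => hz (List.mem_append.2 (Or.inr (by simp [h])))
        show greedyStep (G.induce S) f' ⟨v, hvS⟩ z = 0
        unfold greedyStep
        rw [if_neg (fun h => hzv (congrArg Subtype.val h))]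
        exact hI3 z hzp
    · rw [resList_cons, dif_neg hvS]
      show greedyFrom (G.induce S) f' (resList S rest') x
          = greedyFrom G (greedyStep G f v) rest' x.1
      apply ih (p ++ [v]) hp'
      · intro z hz
        have hzv : z.1 ≠ v := fun h => hvS (h ▸ z.2)
        have hzp : z.1 ∈ p := by
          rcases List.mem_append.1 hz with h | h
          · exact h
          · exact absurd (by simpa using h) hzv
        show f' z = greedyStep G f v z.1
        unfold greedyStep
        rw [if_neg hzv]
        exact hI1 z hzp
      · intro u hu
        rw [(hI2' u hu).1]; exact (hI2' u hu).2
      · intro z hz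
        exact hI3 z (fun h => hz (List.mem_append.2 (Or.inl h)))

lemma greedy_agree (hl : IsConnOrder G l)
    (closure : ∀ u ∈ S, ∀ w, G.Adj u w → idx l w < idx l u → w ∈ S) (x : ↥S) :
    greedy (G.induce S) (resList S l) x = greedy G l x.1 :=
  greedyFrom_agree hl.1 hl.2.1 closure l [] rfl _ _
    (fun _ h => absurd h List.not_mem_nil) (fun _ _ => rfl) (fun _ _ => rfl) x

end Restrict

section Iso

variable {V W : Type*} {G : SimpleGraph V} {G' : SimpleGraph W}

lemma greedyFrom_iso (e : G ≃g G') :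
    ∀ (l : List V) (f : V → ℕ),
      greedyFrom G' (f ∘ e.symm) (l.map e) = (greedyFrom G f l) ∘ e.symm := by
  intro l
  induction l with
  | nil => intro f; rfl
  | cons v t ih =>
    intro f
    show greedyFrom G' (greedyStep G' (f ∘ e.symm) (e v)) (t.map e)
        = (greedyFrom G (greedyStep G f v) t) ∘ e.symm
    have hstep : greedyStep G' (f ∘ e.symm) (e v) = (greedyStep G f v) ∘ e.symm := by
      funext u'
      simp only [Function.comp_apply]
      by_cases hu : u' = e v
      · subst hu
        unfold greedyStep
        rw [e.symm_apply_apply, if_pos rfl, if_pos rfl]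
        congr 1
        ext c
        simp only [Set.mem_setOf_eq]
        constructor
        · rintro ⟨h1, h2⟩
          refine ⟨h1, fun w hw => ?_⟩
          have hadj : G'.Adj (e v) (e w) := e.map_adj_iff.2 hw
          have := h2 (e w) hadj
          simpa using this
        · rintro ⟨h1, h2⟩
          refine ⟨h1, fun w hw => ?_⟩
          have hadj : G.Adj v (e.symm w) := by
            apply e.map_adj_iff.1
            rwa [e.apply_symm_apply]
          exact h2 (e.symm w) hadj
      · unfold greedyStep
        rw [if_neg hu, if_neg (fun h => hu (by rw [← congrArg e h, e.apply_symm_apply]))]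
        rfl
    rw [hstep]
    exact ih _

lemma greedy_iso (e : G ≃g G') (l : List V) (v : V) :
    greedy G' (l.map e) (e v) = greedy G l v := by
  unfold greedy
  have : ((fun _ => 0) : W → ℕ) = ((fun _ => 0) : V → ℕ) ∘ e.symm := rfl
  rw [this, greedyFrom_iso e l]
  simp

lemma isConnOrder_iso (e : G ≃g G') {l : List V} (hl : IsConnOrder G l) :
    IsConnOrder G' (l.map e) := by
  refine ⟨hl.1.map (e.injective), fun w => ?_, ?_⟩
  · rw [List.mem_map]
    exact ⟨e.symm w, hl.2.1 _, e.apply_symm_apply w⟩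
  · intro i hi
    have hlen : (l.map e).length = l.length := l.length_map e
    obtain ⟨j, hj, hadj⟩ := hl.2.2 (Fin.cast hlen i) hi
    refine ⟨Fin.cast hlen.symm j, hj, ?_⟩
    rw [show (l.map e).get (Fin.cast hlen.symm j) = e (l.get j) from by simp,
      show ∀ k, (l.map e).get k = e (l.get (Fin.cast (l.length_map e) k)) from fun k => by simp]
    apply e.map_adj_iff.2
    convert hadj using 2

lemma connected_iso (e : G ≃g G') (h : G.Connected) : G'.Connected := by
  rw [SimpleGraph.connected_iff] at h ⊢
  refine ⟨fun a b => ?_, ⟨e h.2.some⟩⟩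
  have := (h.1 (e.symm a) (e.symm b)).map e.toHom
  simpa using this

lemma colorable_iso (e : G ≃g G') (n : ℕ) : G.Colorable n ↔ G'.Colorable n := by
  constructor
  · rintro ⟨C⟩
    exact ⟨C.comp e.symm.toHom⟩
  · rintro ⟨C⟩
    exact ⟨C.comp e.toHom⟩

lemma chi_iso [Fintype V] [Fintype W] (e : G ≃g G') : chi G = chi G' := by
  unfold chi
  congr 1
  ext n
  exact colorable_iso e n

lemma chi_induce_le [Fintype V] (S : Set V) [Fintype ↥S] : chi (G.induce S) ≤ chi G := by
  have hne : {n : ℕ | G.Colorable n}.Nonempty := ⟨Fintype.card V, G.colorable_of_fintype⟩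
  have hG : G.Colorable (chi G) := Nat.sInf_mem hne
  obtain ⟨C⟩ := hG
  have hom : G.induce S →g G := ⟨fun x => x.1, fun h => h⟩
  exact Nat.sInf_le ⟨C.comp hom⟩

end Iso

section Key

variable {V : Type*} [Fintype V] {G : SimpleGraph V} {l : List V}

lemma key (hl : IsConnOrder G l) (hmin : MinimallyBad G)
    (s : Finset V) (hs : s ≠ Finset.univ)
    (closure : ∀ u ∈ (↑s : Set V), ∀ w, G.Adj u w → idx l w < idx l u → w ∈ (↑s : Set V)) :
    ∀ u, u ∈ (↑s : Set V) → greedy G l u ≤ chi G := by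
  intro u hu
  have hne : (↑s : Set V).Nonempty := ⟨u, hu⟩
  have hconn : (G.induce (↑s : Set V)).Connected := conn_of_closed hl hne closure
  have hGood := hmin.2 s hs hconn
  have e : (G.induce (↑s : Set V)).induce
      (↑(Finset.univ : Finset ↥(↑s : Set V)) : Set ↥(↑s : Set V)) ≃g G.induce (↑s : Set V) :=
    ⟨⟨fun x => x.1, fun y => ⟨y, by simp⟩, fun x => rfl, fun y => rfl⟩, Iff.rfl⟩
  have hl₁ : IsConnOrder (G.induce (↑s : Set V)) (resList (↑s : Set V) l) :=
    isConnOrder_res hl closure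
  have hl₂ := isConnOrder_iso e.symm hl₁
  have hconn₂ := connected_iso e.symm hconn
  have hGO := hGood Finset.univ hconn₂ _ hl₂
  have h1 := hGO (e.symm ⟨u, hu⟩)
  rw [greedy_iso e.symm] at h1
  rw [greedy_agree hl closure ⟨u, hu⟩] at h1
  calc greedy G l u ≤ _ := h1
    _ = chi (G.induce (↑s : Set V)) := chi_iso e
    _ ≤ chi G := chi_induce_le _

lemma common_aux (hl : IsConnOrder G l) (hmin : MinimallyBad G)
    {t : V} (ht : chi G < greedy G l t) (k : ℕ)
    (x₀ b' : ↥{u : V | k ≤ idx l u})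
    (hb' : ¬ (G.induce {u : V | k ≤ idx l u}).Reachable x₀ b')
    (htS : idx l t < k ∨
      ∃ h : k ≤ idx l t, (G.induce {u : V | k ≤ idx l u}).Reachable x₀ ⟨t, h⟩) : False := by
  classical
  set S : Set V := {u : V | idx l u < k} ∪
    {u : V | ∃ h : u ∈ {u : V | k ≤ idx l u},
      (G.induce {u : V | k ≤ idx l u}).Reachable x₀ ⟨u, h⟩} with hS
  have hmemS : ∀ u : V, u ∈ S ↔ (idx l u < k ∨
      ∃ h : k ≤ idx l u, (G.induce {u : V | k ≤ idx l u}).Reachable x₀ ⟨u, h⟩) := by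
    intro u
    rw [hS, Set.mem_union, Set.mem_setOf_eq, Set.mem_setOf_eq]
    exact Iff.rfl
  have hclosure : ∀ u ∈ S, ∀ w, G.Adj u w → idx l w < idx l u → w ∈ S := by
    intro u huS w hadj hwlt
    rw [hmemS] at huS ⊢
    rcases huS with hu | ⟨hu, hreach⟩
    · exact Or.inl (lt_trans hwlt hu)
    · by_cases hwk : k ≤ idx l w
      · refine Or.inr ⟨hwk, hreach.trans ?_⟩
        exact SimpleGraph.Adj.reachable
          (show (G.induce {u : V | k ≤ idx l u}).Adj ⟨u, hu⟩ ⟨w, hwk⟩ from hadj)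
      · exact Or.inl (not_le.1 hwk)
  have hb'S : b'.1 ∉ S := by
    rw [hmemS]
    rintro (h | ⟨h, hre⟩)
    · exact absurd (b'.2 : k ≤ idx l b'.1) (not_le.2 h)
    · have heq : (⟨b'.1, h⟩ : ↥{u : V | k ≤ idx l u}) = b' := Subtype.ext rfl
      rw [heq] at hre
      exact hb' hre
  set s : Finset V := Finset.univ.filter (fun u => u ∈ S) with hs
  have hcoe : (↑s : Set V) = S := by ext u; simp [hs]
  have hsne : s ≠ Finset.univ := by
    intro h
    apply hb'S
    rw [← hcoe, h]
    simp
  have hclosure' : ∀ u ∈ (↑s : Set V), ∀ w, G.Adj u w → idx l w < idx l u →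
      w ∈ (↑s : Set V) := by
    rw [hcoe]; exact hclosure
  have htm : t ∈ (↑s : Set V) := by rw [hcoe, hmemS]; exact htS
  exact absurd (key hl hmin s hsne hclosure' t htm) (not_le.2 ht)

lemma suffix_preconn (hl : IsConnOrder G l) (hmin : MinimallyBad G)
    {t : V} (ht : chi G < greedy G l t) (k : ℕ) :
    (G.induce {u : V | k ≤ idx l u}).Preconnected := by
  classical
  intro a b
  by_contra hr
  rcases le_or_gt k (idx l t) with hk | hk
  · have hor : ¬ (G.induce {u : V | k ≤ idx l u}).Reachable ⟨t, hk⟩ a ∨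
        ¬ (G.induce {u : V | k ≤ idx l u}).Reachable ⟨t, hk⟩ b := by
      by_contra h
      push_neg at h
      exact hr (h.1.symm.trans h.2)
    rcases hor with h | h
    · exact common_aux hl hmin ht k ⟨t, hk⟩ a h (Or.inr ⟨hk, SimpleGraph.Reachable.refl _⟩)
    · exact common_aux hl hmin ht k ⟨t, hk⟩ b h (Or.inr ⟨hk, SimpleGraph.Reachable.refl _⟩)
  · exact common_aux hl hmin ht k a b hr (Or.inl hk)

end Key


theorem stmt5 {V : Type*} [Fintype V] (G : SimpleGraph V) (l : List V)
    (hmin : MinimallyBad G) (hbad : BadOrder G l) :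
    (∀ v : V,
      (G.induce {u : V | idx l u ≤ idx l v}).Connected ∧
      (G.induce {u : V | idx l v ≤ idx l u}).Connected ∧
      (G.induce {u : V | idx l u < idx l v}).Preconnected ∧
      (G.induce {u : V | idx l v < idx l u}).Preconnected) ∧
    G.Connected := by
  obtain ⟨hl, hng⟩ := hbad
  have hex : ∃ t, chi G < greedy G l t := by
    unfold GoodOrder at hng
    push_neg at hng
    exact hng
  obtain ⟨t, ht⟩ := hex
  constructor
  · intro v
    refine ⟨?_, ?_, ?_, ?_⟩
    · exact conn_of_closed hl ⟨v, (by simp : v ∈ {u : V | idx l u ≤ idx l v})⟩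
        (fun u hu w _ hwlt => le_of_lt (lt_of_lt_of_le hwlt hu))
    · rw [SimpleGraph.connected_iff]
      exact ⟨suffix_preconn hl hmin ht (idx l v), ⟨⟨v, (by simp : v ∈ {u : V | idx l v ≤ idx l u})⟩⟩⟩
    · by_cases hne : ({u : V | idx l u < idx l v} : Set V).Nonempty
      · exact (conn_of_closed hl hne
          (fun u hu w _ hwlt => lt_trans hwlt hu)).preconnected
      · intro a b
        exact absurd ⟨a.1, a.2⟩ hne
    · exact suffix_preconn hl hmin ht (idx l v + 1)
  · have hconn : (G.induce (Set.univ : Set V)).Connected :=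
      conn_of_closed hl ⟨t, trivial⟩ (fun u _ w _ _ => trivial)
    exact connected_iso (SimpleGraph.induceUnivIso G) hconn
end
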